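/- Thacker-type exact solution: let z(x) = c x² + bx + d with c > 0, τ ≥ 0 with τ² < 8gc (so the roots λ₁, λ₂ of λ² + τλ + 2gc = 0 are complex conjugate), and define ψ(t) = Aλ₂ e^{λ₁ t} + Bλ₁ e^{λ₂ t}, u(t) = A e^{λ₁ t} + B e^{λ₂ t} with A+B and i(A−B) real so u is real-valued with α = ∂_x z − x ∂²_x z evaluated consistently. Then h(t,x) + z(x) = (x/g − ψ(t)/(2gλ₁λ₂) + α/(λ₁λ₂))ψ(t) + η₀ together with velocity v(t,x) = u(t) solves the 1D shallow water equations ∂ₜh + ∂ₓ(hu) = 0 and ∂ₜ(hu) + ∂ₓ(hu²) + gh∂ₓ(z+h) = −hτu on the wet region {h > 0}, where λ₁λ₂ = g z'' = 2gc and λ₁ + λ₂ = −τ. -/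

import Mathlib

lemma re_hasDerivAt {f : ℝ → ℂ} {f' : ℂ} {t : ℝ} (hf : HasDerivAt f f' t) :
    HasDerivAt (fun s => (f s).re) f'.re t := by
  exact (Complex.reCLM.hasFDerivAt.comp_hasDerivAt t hf)

lemma exp_hasDerivAt (l : ℂ) (t : ℝ) :
    HasDerivAt (fun s : ℝ => Complex.exp (l * s)) (l * Complex.exp (l * t)) t := by
  have h1 : HasDerivAt (fun s : ℝ => (s : ℂ)) 1 t := Complex.ofRealCLM.hasDerivAt
  have h3 := (h1.const_mul l).cexp
  simpa [mul_comm] using h3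

/-- Thacker-type exact solution of the 1D shallow water equations with
linear friction over a parabolic bottom z(x) = c x² + b x + d. -/
theorem thacker_exact_solution
    (g c b d η₀ τ : ℝ) (A B lam1 lam2 : ℂ)
    (hg : 0 < g) (hc : 0 < c) (hτ : 0 ≤ τ)
    (hdisc : τ^2 < 8 * g * c)
    -- λ₁, λ₂ are the (complex conjugate) roots of λ² + τλ + 2gc = 0
    (hroot1 : lam1^2 + (τ : ℂ) * lam1 + ((2 * g * c : ℝ) : ℂ) = 0)
    (hroot2 : lam2^2 + (τ : ℂ) * lam2 + ((2 * g * c : ℝ) : ℂ) = 0)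
    (hvieta1 : lam1 * lam2 = ((2 * g * c : ℝ) : ℂ))
    (hvieta2 : lam1 + lam2 = ((-τ : ℝ) : ℂ))
    -- A + B and i(A - B) real, so that u and ψ are real-valued
    (hAB1 : (A + B).im = 0) (hAB2 : (Complex.I * (A - B)).im = 0)
    (z : ℝ → ℝ) (hz : ∀ x, z x = c * x^2 + b * x + d)
    (u ψ : ℝ → ℝ)
    (hu : ∀ t, u t = (A * Complex.exp (lam1 * t) + B * Complex.exp (lam2 * t)).re)
    (hψ : ∀ t, ψ t = (A * lam2 * Complex.exp (lam1 * t)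
                      + B * lam1 * Complex.exp (lam2 * t)).re)
    (h : ℝ → ℝ → ℝ)
    -- h + z = (x/g - ψ/(2g·λ₁λ₂) + α/(λ₁λ₂)) ψ + η₀, with λ₁λ₂ = 2gc and
    -- α = ∂ₓz - x ∂²ₓz = b
    (hh : ∀ t x, h t x
      = (x / g - ψ t / (2 * g * (2 * g * c)) + b / (2 * g * c)) * ψ t + η₀ - z x) :
    ∀ t x, 0 < h t x →
      (deriv (fun s => h s x) t + deriv (fun s => h t s * u t) x = 0)
      ∧ (deriv (fun s => h s x * u s) t
          + deriv (fun s => h t s * (u t)^2) x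
          + g * h t x * deriv (fun s => z s + h t s) x
        = -(h t x) * τ * u t) := by
  intro t x _
  have hg' : g ≠ 0 := ne_of_gt hg
  have hc' : c ≠ 0 := ne_of_gt hc
  -- derivative of ψ
  have hUd : HasDerivAt (fun s : ℝ => (A * Complex.exp (lam1 * s) + B * Complex.exp (lam2 * s)).re)
      ((A * (lam1 * Complex.exp (lam1 * t)) + B * (lam2 * Complex.exp (lam2 * t))).re) t :=
    re_hasDerivAt (((exp_hasDerivAt lam1 t).const_mul A).add ((exp_hasDerivAt lam2 t).const_mul B))
  have hΨd : HasDerivAt (fun s : ℝ => (A * lam2 * Complex.exp (lam1 * s) + B * lam1 * Complex.exp (lam2 * s)).re)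
      ((A * lam2 * (lam1 * Complex.exp (lam1 * t)) + B * lam1 * (lam2 * Complex.exp (lam2 * t))).re) t :=
    re_hasDerivAt (((exp_hasDerivAt lam1 t).const_mul (A * lam2)).add ((exp_hasDerivAt lam2 t).const_mul (B * lam1)))
  have hψd : HasDerivAt ψ (2 * g * c * u t) t := by
    have hval : (A * lam2 * (lam1 * Complex.exp (lam1 * t)) + B * lam1 * (lam2 * Complex.exp (lam2 * t))).re
        = 2 * g * c * u t := by
      have e : A * lam2 * (lam1 * Complex.exp (lam1 * t)) + B * lam1 * (lam2 * Complex.exp (lam2 * t))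
          = ((2 * g * c : ℝ) : ℂ) * (A * Complex.exp (lam1 * t) + B * Complex.exp (lam2 * t)) := by
        rw [← hvieta1]; ring
      rw [e, Complex.re_ofReal_mul, hu]
    have hstep : HasDerivAt ψ
        ((A * lam2 * (lam1 * Complex.exp (lam1 * t)) + B * lam1 * (lam2 * Complex.exp (lam2 * t))).re) t := by
      have hfun : ψ = fun s : ℝ => (A * lam2 * Complex.exp (lam1 * s) + B * lam1 * Complex.exp (lam2 * s)).re :=
        funext hψ
      rw [hfun]; exact hΨd
    rwa [hval] at hstep
  have hud : HasDerivAt u (-τ * u t - ψ t) t := by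
    have hval : (A * (lam1 * Complex.exp (lam1 * t)) + B * (lam2 * Complex.exp (lam2 * t))).re
        = -τ * u t - ψ t := by
      have e : A * (lam1 * Complex.exp (lam1 * t)) + B * (lam2 * Complex.exp (lam2 * t))
          = ((-τ : ℝ) : ℂ) * (A * Complex.exp (lam1 * t) + B * Complex.exp (lam2 * t))
            - (A * lam2 * Complex.exp (lam1 * t) + B * lam1 * Complex.exp (lam2 * t)) := by
        rw [← hvieta2]; ring
      rw [e, Complex.sub_re, Complex.re_ofReal_mul, hu, hψ]
    have hstep : HasDerivAt u
        ((A * (lam1 * Complex.exp (lam1 * t)) + B * (lam2 * Complex.exp (lam2 * t))).re) t := by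
      have hfun : u = fun s : ℝ => (A * Complex.exp (lam1 * s) + B * Complex.exp (lam2 * s)).re :=
        funext hu
      rw [hfun]; exact hUd
    rwa [hval] at hstep
  -- abbreviations for the derivative values
  set P := ψ t with hP
  set U := u t with hU
  set D : ℝ := 2 * g * c * U with hD
  -- time derivative of h · x
  have hHt : HasDerivAt (fun s => h s x)
      ((-(D / (2 * g * (2 * g * c)))) * P + (x / g - P / (2 * g * (2 * g * c)) + b / (2 * g * c)) * D) t := by
    have hfun : (fun s => h s x)
        = fun s => (x / g - ψ s / (2 * g * (2 * g * c)) + b / (2 * g * c)) * ψ s + (η₀ - z x) := by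
      funext s; rw [hh]; ring
    rw [hfun]
    have h1 : HasDerivAt (fun s => x / g - ψ s / (2 * g * (2 * g * c)) + b / (2 * g * c))
        (-(D / (2 * g * (2 * g * c)))) t := by
      have := ((hψd.div_const (2 * g * (2 * g * c))).const_sub (x / g)).add_const (b / (2 * g * c))
      simpa using this
    exact (h1.mul hψd).add_const (η₀ - z x)
  -- space derivative of h t ·
  have hHx : HasDerivAt (fun s => h t s) (P / g - (2 * c * x + b)) x := by
    have hfun : (fun s => h t s)
        = fun s => (s / g - P / (2 * g * (2 * g * c)) + b / (2 * g * c)) * P + η₀ - (c * s ^ 2 + b * s + d) := by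
      funext s; rw [hh, hz]
    rw [hfun]
    have h1 : HasDerivAt (fun s : ℝ => (s / g - P / (2 * g * (2 * g * c)) + b / (2 * g * c)) * P + η₀)
        (1 / g * P) x := by
      have := ((((hasDerivAt_id x).div_const g).sub_const (P / (2 * g * (2 * g * c)))).add_const
        (b / (2 * g * c))).mul_const P
      simpa using this.add_const η₀
    have h2 : HasDerivAt (fun s : ℝ => c * s ^ 2 + b * s + d) (2 * c * x + b) x := by
      have := (((hasDerivAt_pow 2 x).const_mul c).add ((hasDerivAt_id x).const_mul b)).add_const d
      refine this.congr_deriv ?_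
      push_cast; ring
    have := h1.sub h2
    refine this.congr_deriv ?_
    ring
  -- space derivative of z + h t
  have hZHx : HasDerivAt (fun s => z s + h t s) (P / g) x := by
    have hzx : HasDerivAt z (2 * c * x + b) x := by
      have hfun : z = fun s => c * s ^ 2 + b * s + d := funext hz
      rw [hfun]
      have := (((hasDerivAt_pow 2 x).const_mul c).add ((hasDerivAt_id x).const_mul b)).add_const d
      refine this.congr_deriv ?_
      push_cast; ring
    have := hzx.add hHx
    refine this.congr_deriv ?_
    ring
  have e1 : deriv (fun s => h s x) t
      = (-(D / (2 * g * (2 * g * c)))) * P + (x / g - P / (2 * g * (2 * g * c)) + b / (2 * g * c)) * D :=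
    hHt.deriv
  have e2 : deriv (fun s => h t s * u t) x = (P / g - (2 * c * x + b)) * U :=
    (hHx.mul_const U).deriv
  have e3 : deriv (fun s => h s x * u s) t
      = ((-(D / (2 * g * (2 * g * c)))) * P + (x / g - P / (2 * g * (2 * g * c)) + b / (2 * g * c)) * D) * U
        + h t x * (-τ * U - P) :=
    (hHt.mul hud).deriv
  have e4 : deriv (fun s => h t s * (u t) ^ 2) x = (P / g - (2 * c * x + b)) * U ^ 2 :=
    (hHx.mul_const (U ^ 2)).deriv
  have e5 : deriv (fun s => z s + h t s) x = P / g := hZHx.deriv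
  have hhtx : h t x = (x / g - P / (2 * g * (2 * g * c)) + b / (2 * g * c)) * P + η₀ - z x := hh t x
  constructor
  · rw [e1, e2, hD]
    field_simp
    ring
  · rw [e3, e4, e5, hhtx, hD]
    field_simp
    ring
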